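/- Let r > 1 and c > 0 be real numbers. Let (s_n)_{n≥0} be a sequence of positive real numbers such that s_n / r^n converges to c as n → ∞, and let (e_n)_{n≥0} be a sequence of real numbers such that the series ∑_{n≥0} |e_n| r^{−n} converges. Define y_n = ∑_{i=0}^{n} e_i s_{n−i}. Then y_n / s_n converges to ∑_{i=0}^{∞} e_i r^{−i} as n → ∞. (This is the analytic content of Lemma 5.2(b) of the paper: if Y(t) = E(t)·Z_X(t) over a finite field and E(1/q^d) converges, then lim #Y_j/#Sym^j X = #E(1/q^d), where s_n plays the role of #Sym^n X and r the role of q^d.) -/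

import Mathlib

open Filter Finset

/-- The analytic content of Lemma 5.2(b) of the paper: if `s_n / r^n → c > 0`,
`∑ |e_n| / r^n < ∞`, and `y_n = ∑_{i=0}^{n} e_i s_{n−i}`, then
`y_n / s_n → ∑_{i=0}^{∞} e_i / r^i`. -/
theorem stmt6 (r c : ℝ) (hr : 1 < r) (hc : 0 < c) (s e : ℕ → ℝ)
    (hs : ∀ n, 0 < s n)
    (hslim : Filter.Tendsto (fun n => s n / r ^ n) Filter.atTop (nhds c))
    (he : Summable fun n => |e n| / r ^ n) :
    Filter.Tendsto (fun n => (∑ i ∈ Finset.range (n + 1), e i * s (n - i)) / s n)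
      Filter.atTop (nhds (∑' i : ℕ, e i / r ^ i)) := by
  have hr0 : (0:ℝ) < r := lt_trans one_pos hr
  set a : ℕ → ℝ := fun n => s n / r ^ n with ha
  have ha_pos : ∀ n, 0 < a n := fun n => div_pos (hs n) (pow_pos hr0 n)
  -- upper bound
  obtain ⟨M, hM⟩ : BddAbove (Set.range a) := hslim.bddAbove_range
  have hMle : ∀ n, a n ≤ M := fun n => hM ⟨n, rfl⟩
  have hM0 : 0 < M := lt_of_lt_of_le (ha_pos 0) (hMle 0)
  -- lower bound
  obtain ⟨N, hN⟩ := (hslim.eventually (eventually_ge_nhds (half_lt_self hc))).exists_forall_of_atTop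
  set m : ℝ := min (c / 2) ((Finset.range (N + 1)).inf' (by simp) a) with hm
  have hm0 : 0 < m := lt_min (half_pos hc) (by
    apply Finset.lt_inf'_iff _ |>.mpr
    intro i _
    exact ha_pos i)
  have hmle : ∀ n, m ≤ a n := by
    intro n
    rcases le_or_gt N n with h | h
    · exact le_trans (min_le_left _ _) (hN n h)
    · exact le_trans (min_le_right _ _)
        (Finset.inf'_le a (Finset.mem_range.mpr (by omega)))
  -- the terms
  set f : ℕ → ℕ → ℝ := fun n i => if i ≤ n then e i * s (n - i) / s n else 0 with hf
  have key : ∀ n i, i ≤ n → e i * s (n - i) / s n = e i / r ^ i * (a (n - i) / a n) := by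
    intro n i hi
    have : (r:ℝ) ^ n = r ^ i * r ^ (n - i) := by
      rw [← pow_add]; congr 1; omega
    have hsn : s n ≠ 0 := ne_of_gt (hs n)
    have hri : (r:ℝ) ^ i ≠ 0 := ne_of_gt (pow_pos hr0 i)
    have hrni : (r:ℝ) ^ (n - i) ≠ 0 := ne_of_gt (pow_pos hr0 (n - i))
    simp only [ha]
    rw [this]
    field_simp
  have hsum_eq : ∀ n, (∑ i ∈ Finset.range (n + 1), e i * s (n - i)) / s n = ∑' i, f n i := by
    intro n
    rw [tsum_eq_sum (s := Finset.range (n + 1)) (by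
      intro i hi
      simp only [Finset.mem_range] at hi
      simp only [hf]
      rw [if_neg (by omega)])]
    rw [Finset.sum_div]
    apply Finset.sum_congr rfl
    intro i hi
    simp only [Finset.mem_range] at hi
    simp only [hf]
    rw [if_pos (by omega : i ≤ n)]
  have hlim : Tendsto (fun n => ∑' i, f n i) atTop (nhds (∑' i : ℕ, e i / r ^ i)) := by
    apply tendsto_tsum_of_dominated_convergence
      (bound := fun i => M / m * (|e i| / r ^ i)) (he.mul_left _)
    · intro i
      have h1 : Tendsto (fun n => a (n - i)) atTop (nhds c) :=
        hslim.comp (tendsto_sub_atTop_nat i)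
      have h2 : Tendsto (fun n => a (n - i) / a n) atTop (nhds 1) := by
        have := h1.div hslim (ne_of_gt hc)
        rw [div_self (ne_of_gt hc)] at this; exact this
      have h3 : Tendsto (fun n => e i / r ^ i * (a (n - i) / a n)) atTop
          (nhds (e i / r ^ i)) := by
        simpa using (tendsto_const_nhds.mul h2 :
          Tendsto (fun n => e i / r ^ i * (a (n - i) / a n)) atTop (nhds (e i / r ^ i * 1)))
      apply h3.congr'
      filter_upwards [eventually_ge_atTop i] with n hn
      simp only [hf, if_pos hn, key n i hn]
    · filter_upwards with n i
      simp only [hf]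
      split
      · rename_i hi
        rw [key n i hi]
        rw [Real.norm_eq_abs, abs_mul, abs_div, abs_div, abs_of_pos (ha_pos (n - i)),
          abs_of_pos (ha_pos n), abs_of_pos (pow_pos hr0 i)]
        rw [mul_comm (M / m)]
        apply mul_le_mul_of_nonneg_left _ (by positivity)
        exact div_le_div₀ (le_of_lt hM0) (hMle _) hm0 (hmle n)
      · simp
        positivity
  exact Filter.Tendsto.congr (fun n => (hsum_eq n).symm) hlim
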